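/- Let r be a rational function with exactly k poles, all simple, at points w_1, …, w_k of the Riemann sphere, and suppose |a| ≥ T_0 implies r(z) = a has k distinct solutions. Then for all sufficiently large T, the set Ω(r,T) = {z ∉ r^{-1}(∞) : |r(z)| > T} is a disjoint union of k connected open sets, each containing exactly one pole in its closure, and for every a with |a| > T each of these components contains exactly one solution of r(z) = a. -/

import Mathlib

open Set Function Filter Metric Polynomial
open scoped OnePoint Topology


/-- pairwise disjoint open neighborhoods of finitely many distinct points in a T2 space -/
lemma aux_disjoint_opens {X : Type*} [TopologicalSpace X] [T2Space X] {k : ℕ}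
    (w : Fin k → X) (hw : Function.Injective w) :
    ∃ O : Fin k → Set X, (∀ i, IsOpen (O i)) ∧ (∀ i, w i ∈ O i) ∧
      Pairwise (Function.onFun Disjoint O) := by
  have sep : ∀ i j : Fin k, ∃ AB : Set X × Set X, i ≠ j →
      IsOpen AB.1 ∧ IsOpen AB.2 ∧ w i ∈ AB.1 ∧ w j ∈ AB.2 ∧ Disjoint AB.1 AB.2 := by
    intro i j
    by_cases h : i ≠ j
    · obtain ⟨A, B, hA, hB, hiA, hjB, hd⟩ := t2_separation (hw.ne h)
      exact ⟨(A, B), fun _ => ⟨hA, hB, hiA, hjB, hd⟩⟩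
    · exact ⟨(univ, univ), fun h' => absurd h' h⟩
  choose AB hAB using sep
  refine ⟨fun i => (⋂ j, ⋂ (_ : i ≠ j), (AB i j).1) ∩ ⋂ j, ⋂ (_ : j ≠ i), (AB j i).2,
    ?_, ?_, ?_⟩
  · intro i
    refine IsOpen.inter ?_ ?_ <;>
      exact isOpen_iInter_of_finite fun j => isOpen_iInter_of_finite fun h =>
        by first | exact (hAB _ _ h).1 | exact (hAB _ _ h).2.1
  · intro i
    constructor
    · exact mem_iInter.2 fun j => mem_iInter.2 fun h => (hAB i j h).2.2.1
    · exact mem_iInter.2 fun j => mem_iInter.2 fun h => (hAB j i h).2.2.2.1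
  · intro i j hij
    have h1 : (⋂ l, ⋂ (_ : i ≠ l), (AB i l).1) ⊆ (AB i j).1 := by
      intro x hx; exact mem_iInter.1 (mem_iInter.1 hx j) hij
    have h2 : (⋂ l, ⋂ (_ : l ≠ j), (AB l j).2) ⊆ (AB i j).2 := by
      intro x hx; exact mem_iInter.1 (mem_iInter.1 hx i) hij
    exact Disjoint.mono (inter_subset_left.trans h1) (inter_subset_right.trans h2)
      (hAB i j hij).2.2.2.2

/-- the punctured ball in ℂ is connected -/
lemma aux_punctured_ball_connected {ρ : ℝ} (hρ : 0 < ρ) :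
    IsConnected (Metric.ball (0:ℂ) ρ \ {0}) := by
  have hrank : 1 < Module.rank ℝ ℂ := by rw [Complex.rank_real_complex]; norm_num
  have hsub : Metric.sphere (0:ℂ) (ρ/2) ⊆ Metric.ball (0:ℂ) ρ \ {0} := by
    intro z hz
    rw [Metric.mem_sphere, dist_zero_right] at hz
    refine ⟨by rw [Metric.mem_ball, dist_zero_right, hz]; linarith, ?_⟩
    simp only [mem_singleton_iff]
    intro h; rw [h, norm_zero] at hz; linarith
  have hpc : IsPathConnected (Metric.ball (0:ℂ) ρ \ {0}) := by
    have hz₀ : ((ρ/2 : ℝ) : ℂ) ∈ Metric.sphere (0:ℂ) (ρ/2) := by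
      simp [Complex.norm_real, abs_of_pos (by linarith : (0:ℝ) < ρ/2)]
      linarith [abs_of_pos hρ]
    refine ⟨((ρ/2 : ℝ) : ℂ), hsub hz₀, ?_⟩
    intro x hx
    obtain ⟨hxball, hxne⟩ := hx
    rw [Metric.mem_ball, dist_zero_right] at hxball
    have hxne' : x ≠ 0 := hxne
    have hnx : 0 < ‖x‖ := norm_pos_iff.2 hxne'
    have habs : ‖x‖ ≠ 0 := by simpa using hxne'
    set c : ℝ := (ρ/2) / ‖x‖ with hc
    have hcpos : 0 < c := by positivity
    set y : ℂ := c • x with hy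
    have hyn : ‖y‖ = ρ/2 := by
      rw [hy, norm_smul, Real.norm_eq_abs, abs_of_pos hcpos, hc]
      field_simp
    have hysph : y ∈ Metric.sphere (0:ℂ) (ρ/2) := by simp [hyn]
    -- segment from x to y stays in the punctured ball
    have hseg : segment ℝ x y ⊆ Metric.ball (0:ℂ) ρ \ {0} := by
      rintro z ⟨a, b, ha, hb, hab, rfl⟩
      have hz : a • x + b • y = ((a + b * c) : ℝ) • x := by
        rw [hy, smul_smul, ← add_smul]
      have hspos : 0 < a + b * c := by
        rcases eq_or_lt_of_le hb with hb0 | hb0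
        · have : a = 1 := by rw [← hb0] at hab; linarith
          nlinarith
        · nlinarith
      constructor
      · rw [Metric.mem_ball, dist_zero_right, hz, norm_smul, Real.norm_eq_abs,
          abs_of_pos hspos]
        have h1 : (a + b * c) * ‖x‖ = a * ‖x‖ + b * (ρ/2) := by
          rw [hc]; field_simp
        nlinarith
      · simp only [mem_singleton_iff, hz]
        exact smul_ne_zero (ne_of_gt hspos) hxne'
    have j1 : JoinedIn (Metric.ball (0:ℂ) ρ \ {0}) x y := by
      have : IsPathConnected (segment ℝ x y) :=
        (convex_segment x y).isPathConnected ⟨x, left_mem_segment ℝ x y⟩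
      exact (this.joinedIn x (left_mem_segment ℝ x y) y (right_mem_segment ℝ x y)).mono hseg
    have j2 : JoinedIn (Metric.ball (0:ℂ) ρ \ {0}) y ((ρ/2 : ℝ) : ℂ) := by
      have := isPathConnected_sphere hrank (0:ℂ) (by linarith : (0:ℝ) ≤ ρ/2)
      exact (this.joinedIn y hysph _ hz₀).mono hsub
    exact (j1.trans j2).symm
  exact hpc.isConnected


noncomputable def auxPhi : ℂ → OnePoint ℂ :=
  fun u => if u = 0 then ∞ else ((u⁻¹ : ℂ) : OnePoint ℂ)

lemma auxPhi_zero : auxPhi 0 = ∞ := by simp [auxPhi]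

lemma auxPhi_ne_zero {u : ℂ} (hu : u ≠ 0) : auxPhi u = ((u⁻¹ : ℂ) : OnePoint ℂ) := by
  simp [auxPhi, hu]

lemma auxPhi_injective : Function.Injective auxPhi := by
  intro a b hab
  by_cases ha : a = 0 <;> by_cases hb : b = 0
  · rw [ha, hb]
  · rw [ha, auxPhi_zero, auxPhi_ne_zero hb] at hab
    exact absurd hab.symm (OnePoint.coe_ne_infty _)
  · rw [hb, auxPhi_zero, auxPhi_ne_zero ha] at hab
    exact absurd hab (OnePoint.coe_ne_infty _)
  · rw [auxPhi_ne_zero ha, auxPhi_ne_zero hb] at hab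
    have := OnePoint.coe_injective hab
    exact inv_injective this

lemma auxPhi_image_of_not_mem {t : Set ℂ} (h0 : (0:ℂ) ∉ t) :
    auxPhi '' t = (↑) '' {z : ℂ | z ≠ 0 ∧ z⁻¹ ∈ t} := by
  ext x
  constructor
  · rintro ⟨u, hu, rfl⟩
    have hu0 : u ≠ 0 := fun h => h0 (h ▸ hu)
    rw [auxPhi_ne_zero hu0]
    exact ⟨u⁻¹, ⟨inv_ne_zero hu0, by rwa [inv_inv]⟩, rfl⟩
  · rintro ⟨z, ⟨hz0, hzt⟩, rfl⟩
    exact ⟨z⁻¹, hzt, by rw [auxPhi_ne_zero (inv_ne_zero hz0), inv_inv]⟩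

lemma auxPhi_isOpen_inv_set {t : Set ℂ} (ht : IsOpen t) :
    IsOpen {z : ℂ | z ≠ 0 ∧ z⁻¹ ∈ t} := by
  have : {z : ℂ | z ≠ 0 ∧ z⁻¹ ∈ t} = {(0:ℂ)}ᶜ ∩ (fun z : ℂ => z⁻¹) ⁻¹' t := by
    ext z; simp [mem_compl_iff, and_comm]
  rw [this]
  have hc : ContinuousOn (fun z : ℂ => z⁻¹) {(0:ℂ)}ᶜ := by
    apply ContinuousOn.inv₀ continuousOn_id
    intro z hz; simpa using hz
  have := hc.isOpen_inter_preimage (isOpen_compl_singleton) ht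
  exact this

lemma auxPhi_isOpenMap : IsOpenMap auxPhi := by
  intro t ht
  by_cases h0 : (0:ℂ) ∈ t
  · -- image contains ∞
    have hsplit : auxPhi '' t = {∞} ∪ (↑) '' {z : ℂ | z ≠ 0 ∧ z⁻¹ ∈ t} := by
      ext x
      simp only [mem_union, mem_singleton_iff, mem_image, mem_setOf_eq]
      constructor
      · rintro ⟨u, hu, rfl⟩
        by_cases hu0 : u = 0
        · left; rw [hu0, auxPhi_zero]
        · right
          exact ⟨u⁻¹, ⟨inv_ne_zero hu0, by rwa [inv_inv]⟩, (auxPhi_ne_zero hu0).symm⟩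
      · rintro (rfl | ⟨z, ⟨hz0, hzt⟩, rfl⟩)
        · exact ⟨0, h0, auxPhi_zero⟩
        · exact ⟨z⁻¹, hzt, by rw [auxPhi_ne_zero (inv_ne_zero hz0), inv_inv]⟩
    rw [hsplit]
    have hmem' : ∞ ∈ ({∞} ∪ (↑) '' {z : ℂ | z ≠ 0 ∧ z⁻¹ ∈ t} : Set (OnePoint ℂ)) :=
      Or.inl rfl
    rw [OnePoint.isOpen_iff_of_mem hmem']
    have hpre : ((↑) : ℂ → OnePoint ℂ) ⁻¹' ({∞} ∪ (↑) '' {z : ℂ | z ≠ 0 ∧ z⁻¹ ∈ t})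
        = {z : ℂ | z ≠ 0 ∧ z⁻¹ ∈ t} := by
      rw [preimage_union, OnePoint.coe_preimage_infty, empty_union,
        preimage_image_eq _ OnePoint.coe_injective]
    rw [hpre]
    obtain ⟨δ, hδ, hδsub⟩ := Metric.isOpen_iff.1 ht 0 h0
    have hbdd : {z : ℂ | z ≠ 0 ∧ z⁻¹ ∈ t}ᶜ ⊆ Metric.closedBall 0 (1/δ) := by
      intro z hz
      rw [mem_compl_iff, mem_setOf_eq, not_and_or] at hz
      by_contra hctr
      rw [Metric.mem_closedBall, dist_zero_right, not_le] at hctr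
      have hz0 : z ≠ 0 := by
        intro h; rw [h, norm_zero] at hctr
        have := one_div_pos.mpr hδ; linarith
      rcases hz with h | h
      · exact h hz0
      · apply h
        apply hδsub
        rw [Metric.mem_ball, dist_zero_right, norm_inv]
        rw [one_div] at hctr
        calc ‖z‖⁻¹ < (δ⁻¹)⁻¹ := by
              apply inv_strictAnti₀ (by positivity) hctr
        _ = δ := by rw [inv_inv]
    refine ⟨isClosed_compl_iff.2 (auxPhi_isOpen_inv_set ht), ?_⟩
    exact (isCompact_closedBall _ _).of_isClosed_subset
      (isClosed_compl_iff.2 (auxPhi_isOpen_inv_set ht)) hbdd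
  · rw [auxPhi_image_of_not_mem h0]
    exact OnePoint.isOpenMap_coe _ (auxPhi_isOpen_inv_set ht)

lemma auxPhi_continuous : Continuous auxPhi := by
  rw [continuous_iff_continuousAt]
  intro u
  by_cases hu : u = 0
  · subst hu
    rw [ContinuousAt, auxPhi_zero]
    intro s hs
    obtain ⟨o, hos, hoopen, ho⟩ := mem_nhds_iff.1 hs
    obtain ⟨hK, -⟩ := (OnePoint.isOpen_iff_of_mem' ho).1 hoopen
    obtain ⟨R, hR⟩ := hK.isBounded.subset_closedBall 0
    rw [Filter.mem_map]
    have hsub : Metric.ball (0:ℂ) (1/(|R|+1)) ⊆ auxPhi ⁻¹' s := by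
      intro u hu
      by_cases hu0 : u = 0
      · rw [mem_preimage, hu0, auxPhi_zero]; exact hos ho
      · rw [mem_preimage, auxPhi_ne_zero hu0]
        apply hos
        have : u⁻¹ ∉ (((↑) : ℂ → OnePoint ℂ) ⁻¹' o)ᶜ := by
          intro hmem
          have hRb := hR hmem
          rw [Metric.mem_closedBall, dist_zero_right] at hRb
          rw [Metric.mem_ball, dist_zero_right] at hu
          have hpos : 0 < ‖u‖ := norm_pos_iff.2 hu0
          have h1 : ‖u⁻¹‖ = ‖u‖⁻¹ := norm_inv u
          have h2 : (|R|+1) < ‖u‖⁻¹ := by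
            rw [one_div] at hu
            have := inv_strictAnti₀ hpos hu
            rwa [inv_inv] at this
          have h3 : ‖u⁻¹‖ ≤ |R| := le_trans hRb (le_abs_self R)
          rw [h1] at h3
          linarith
        rw [mem_compl_iff, not_not] at this
        exact this
    exact Filter.mem_of_superset (Metric.ball_mem_nhds 0 (by positivity)) hsub
  · have hev : ∀ᶠ v in 𝓝 u, auxPhi v = ((v⁻¹ : ℂ) : OnePoint ℂ) := by
      filter_upwards [isOpen_compl_singleton.mem_nhds (by simpa using hu)] with v hv
      exact auxPhi_ne_zero (by simpa using hv)
    have hca : ContinuousAt (fun v : ℂ => ((v⁻¹ : ℂ) : OnePoint ℂ)) u :=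
      (OnePoint.continuous_coe.continuousAt).comp (continuousAt_inv₀ hu)
    exact hca.congr (Filter.EventuallyEq.symm hev)

def GoodAt (r : OnePoint ℂ → OnePoint ℂ) (wi : OnePoint ℂ) (O : Set (OnePoint ℂ)) : Prop :=
  ∃ (G : Set (OnePoint ℂ)) (V : ℝ → Set (OnePoint ℂ)) (T₂ : ℝ), 1 ≤ T₂ ∧
    IsOpen G ∧ wi ∈ G ∧ G ⊆ O ∧
    ∀ T : ℝ, T₂ ≤ T →
      IsOpen (V T) ∧ IsConnected (V T) ∧ V T ⊆ O ∧
      (∀ x ∈ V T, ∃ c : ℂ, r x = (c : OnePoint ℂ) ∧ T < ‖c‖) ∧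
      (∀ x ∈ G, (∃ c : ℂ, r x = (c : OnePoint ℂ) ∧ T < ‖c‖) → x ∈ V T) ∧
      wi ∈ closure (V T) ∧
      (∀ a : ℂ, T < ‖a‖ → (V T ∩ r ⁻¹' {(a : OnePoint ℂ)}).ncard = 1)



/-- Master local lemma -/
lemma aux_local_good (r : OnePoint ℂ → OnePoint ℂ) (Φ : ℂ → OnePoint ℂ) (c₀ : ℂ)
    (hΦc : Continuous Φ) (hΦinj : Function.Injective Φ)
    (hΦopen : IsOpenMap Φ)
    (h : ℂ → ℂ) (d : ℂ) (hd : d ≠ 0) (hder : HasStrictDerivAt h d c₀) (h0 : h c₀ = 0)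
    (s₀ : Set ℂ) (hs₀ : IsOpen s₀) (hc₀s : c₀ ∈ s₀) (hhc : ContinuousOn h s₀)
    (hform : ∀ z ∈ s₀, ∀ a : ℂ, a ≠ 0 → (r (Φ z) = (a : OnePoint ℂ) ↔ h z = a⁻¹))
    (O : Set (OnePoint ℂ)) (hO : IsOpen O) (hwO : Φ c₀ ∈ O) :
    GoodAt r (Φ c₀) O := by
  rw [GoodAt]
  -- inverse function theorem
  have hF := hder.hasStrictFDerivAt_equiv hd
  set e : OpenPartialHomeomorph ℂ ℂ := hF.toOpenPartialHomeomorph h with he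
  have hecoe : (e : ℂ → ℂ) = h := hF.toOpenPartialHomeomorph_coe
  have hc₀e : c₀ ∈ e.source := hF.mem_toOpenPartialHomeomorph_source
  -- choose small open s ⊆ e.source ∩ s₀ ∩ Φ⁻¹' O
  obtain ⟨s, hsopen, hc₀ss, hssub⟩ :
      ∃ s : Set ℂ, IsOpen s ∧ c₀ ∈ s ∧ s ⊆ e.source ∩ s₀ ∩ Φ ⁻¹' O :=
    ⟨e.source ∩ s₀ ∩ Φ ⁻¹' O,
      (e.open_source.inter hs₀).inter (hO.preimage hΦc),
      ⟨⟨hc₀e, hc₀s⟩, hwO⟩, subset_rfl⟩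
  have hse : s ⊆ e.source := fun z hz => ((hssub hz).1).1
  have hss₀ : s ⊆ s₀ := fun z hz => ((hssub hz).1).2
  have hsO : s ⊆ Φ ⁻¹' O := fun z hz => (hssub hz).2
  have hes : ∀ z ∈ s, e z = h z := fun z _ => by rw [hecoe]
  -- the image e '' s is open and contains 0
  have himopen : IsOpen (e '' s) := e.isOpen_image_of_subset_source hsopen hse
  have h0mem : (0:ℂ) ∈ e '' s := ⟨c₀, hc₀ss, by rw [hecoe, h0]⟩
  obtain ⟨ε, hεpos, hεsub⟩ := Metric.isOpen_iff.1 himopen 0 h0mem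
  -- injectivity of h on s
  have hinjs : Set.InjOn h s := by
    intro z1 h1 z2 h2 hz
    refine e.injOn (hse h1) (hse h2) ?_
    rw [hecoe]; exact hz
  -- define V
  set W : ℝ → Set ℂ := fun T => s ∩ {z | h z ≠ 0 ∧ ‖h z‖ < 1/T} with hW
  set V : ℝ → Set (OnePoint ℂ) := fun T => Φ '' W T with hV
  set T₂ : ℝ := max 1 (2/ε) with hT₂
  have hT₂1 : (1:ℝ) ≤ T₂ := le_max_left _ _
  -- basic facts for T ≥ T₂
  have hTfacts : ∀ T : ℝ, T₂ ≤ T → 0 < T ∧ 0 < 1/T ∧ 1/T < ε := by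
    intro T hT
    have h1T : (1:ℝ) ≤ T := le_trans hT₂1 hT
    have hTpos : 0 < T := lt_of_lt_of_le one_pos h1T
    refine ⟨hTpos, by positivity, ?_⟩
    have h2ε : 2/ε ≤ T := le_trans (le_max_right _ _) hT
    rw [div_lt_iff₀ hTpos]
    have h2 : 2 ≤ T * ε := by
      calc (2:ℝ) = (2/ε) * ε := by field_simp
      _ ≤ T * ε := mul_le_mul_of_nonneg_right h2ε (le_of_lt hεpos)
    nlinarith
  -- W T is open
  have hWopen : ∀ T : ℝ, IsOpen (W T) := by
    intro T
    have : W T = s ∩ (h ⁻¹' (Metric.ball 0 (1/T) \ {0})) ∩ s := by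
      ext z
      simp only [hW, mem_inter_iff, mem_setOf_eq, mem_preimage, mem_diff,
        Metric.mem_ball, dist_zero_right, mem_singleton_iff]
      tauto
    rw [this]
    exact ((hhc.mono hss₀).isOpen_inter_preimage hsopen
      ((Metric.isOpen_ball).sdiff isClosed_singleton)).inter hsopen
  -- W T = e.symm '' (ball \ {0}) when 1/T ≤ ε
  have hWsymm : ∀ T : ℝ, T₂ ≤ T → W T = e.symm '' (Metric.ball (0:ℂ) (1/T) \ {0}) := by
    intro T hT
    obtain ⟨hTpos, hball, hεT⟩ := hTfacts T hT
    have hbsub : Metric.ball (0:ℂ) (1/T) \ {0} ⊆ e '' s := fun b hb =>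
      hεsub (Metric.ball_subset_ball (le_of_lt hεT) hb.1)
    ext z
    constructor
    · rintro ⟨hzs, hz0, hzlt⟩
      refine ⟨h z, ⟨by simpa [dist_zero_right] using hzlt, hz0⟩, ?_⟩
      have : e.symm (e z) = z := e.left_inv (hse hzs)
      rw [hes z hzs] at this
      exact this
    · rintro ⟨b, hb, rfl⟩
      obtain ⟨z', hz's, hz'b⟩ := hbsub hb
      have hz' : e.symm b = z' := by rw [← hz'b, e.left_inv (hse hz's)]
      rw [hz']
      refine ⟨hz's, ?_, ?_⟩
      · rw [← hes z' hz's, hz'b]; exact hb.2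
      · rw [← hes z' hz's, hz'b]
        simpa [dist_zero_right] using hb.1
  refine ⟨Φ '' s, V, T₂, hT₂1, hΦopen s hsopen, ⟨c₀, hc₀ss, rfl⟩,
      image_subset_iff.2 hsO, ?_⟩
  intro T hT
  obtain ⟨hTpos, hball, hεT⟩ := hTfacts T hT
  have hWc₀ : c₀ ∉ W T := fun hc => hc.2.1 h0
  constructor
  · -- open
    exact hΦopen _ (hWopen T)
  constructor
  · -- connected
    show IsConnected (Φ '' W T)
    rw [hWsymm T hT]
    have hconn : IsConnected (Metric.ball (0:ℂ) (1/T) \ {0}) :=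
      aux_punctured_ball_connected hball
    have hsub : Metric.ball (0:ℂ) (1/T) \ {0} ⊆ e.target := by
      intro b hb
      have : b ∈ e '' s := hεsub (Metric.ball_subset_ball (le_of_lt hεT) hb.1)
      obtain ⟨z', hz's, rfl⟩ := this
      exact e.map_source (hse hz's)
    have h1 : IsConnected (e.symm '' (Metric.ball (0:ℂ) (1/T) \ {0})) :=
      hconn.image _ (e.continuousOn_symm.mono hsub)
    exact h1.image _ hΦc.continuousOn
  constructor
  · -- ⊆ O
    exact (image_mono (inter_subset_left)).trans (image_subset_iff.2 hsO)
  constructor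
  · -- V ⊆ Ω
    rintro x ⟨z, ⟨hzs, hz0, hzlt⟩, rfl⟩
    refine ⟨(h z)⁻¹, ?_, ?_⟩
    · exact (hform z (hss₀ hzs) (h z)⁻¹ (inv_ne_zero hz0)).2 (by rw [inv_inv])
    · rw [norm_inv]
      rw [div_eq_inv_mul, mul_one] at hzlt
      have hnz : 0 < ‖h z‖ := norm_pos_iff.2 hz0
      calc T = (T⁻¹)⁻¹ := by rw [inv_inv]
      _ < ‖h z‖⁻¹ := by
          apply inv_strictAnti₀ hnz hzlt
  constructor
  · -- G covering
    rintro x ⟨z, hzs, rfl⟩ ⟨c, hc, hcT⟩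
    have hc0 : c ≠ 0 := by
      intro h'; rw [h', norm_zero] at hcT; exact absurd hcT (not_lt.2 (le_of_lt hTpos))
    have hz : h z = c⁻¹ := (hform z (hss₀ hzs) c hc0).1 hc
    refine ⟨z, ⟨hzs, ?_, ?_⟩, rfl⟩
    · rw [hz]; exact inv_ne_zero hc0
    · rw [hz, norm_inv, div_eq_inv_mul, mul_one]
      exact inv_strictAnti₀ hTpos hcT
  constructor
  · -- closure
    have h0t : (0:ℂ) ∈ e.target := by
      obtain ⟨z', hz's, hz'b⟩ := h0mem
      rw [← hz'b]; exact e.map_source (hse hz's)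
    have hcont0 : ContinuousAt e.symm 0 := by
      have := e.symm.continuousAt (x := 0) (by simpa using h0t)
      exact this
    have h0sym : e.symm 0 = c₀ := by
      have : e.symm (e c₀) = c₀ := e.left_inv hc₀e
      rwa [hecoe, h0] at this
    have hc₀cl : c₀ ∈ closure (W T) := by
      rw [Metric.mem_closure_iff]
      intro δ hδ
      rw [Metric.continuousAt_iff] at hcont0
      obtain ⟨η, hη, hcont⟩ := hcont0 δ hδ
      set t : ℝ := min η (1/T) / 2 with ht
      have htpos : 0 < t := by positivity
      set b : ℂ := (t : ℂ) with hb
      have hbn : ‖b‖ = t := by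
        rw [hb, Complex.norm_real, Real.norm_eq_abs, abs_of_pos htpos]
      have hbball : b ∈ Metric.ball (0:ℂ) (1/T) \ {0} := by
        constructor
        · rw [Metric.mem_ball, dist_zero_right, hbn]
          have : t < 1/T := by
            have := min_le_right η (1/T)
            simp only [ht]
            linarith [lt_of_le_of_lt (le_refl (min η (1/T))) (lt_add_of_pos_right _ hball)]
          exact this
        · simp only [mem_singleton_iff, hb]
          intro hcon
          have := congrArg Complex.re hcon
          simp at this
          linarith
      have hbη : dist b 0 < η := by
        rw [dist_zero_right, hbn, ht]
        have := min_le_left η (1/T)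
        linarith
      have hWb : e.symm b ∈ W T := by
        rw [hWsymm T hT]
        exact ⟨b, hbball, rfl⟩
      refine ⟨e.symm b, hWb, ?_⟩
      have := hcont hbη
      rw [h0sym] at this
      rw [dist_comm]
      exact this
    exact image_closure_subset_closure_image hΦc ⟨c₀, hc₀cl, rfl⟩
  · -- counting
    intro a haT
    have ha0 : a ≠ 0 := by
      intro h'; rw [h', norm_zero] at haT; exact absurd haT (not_lt.2 (le_of_lt hTpos))
    have hainv : a⁻¹ ∈ Metric.ball (0:ℂ) (1/T) \ {0} := by
      refine ⟨?_, inv_ne_zero ha0⟩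
      rw [Metric.mem_ball, dist_zero_right, norm_inv, div_eq_inv_mul, mul_one]
      exact inv_strictAnti₀ hTpos haT
    have hmem : a⁻¹ ∈ e '' s := hεsub (Metric.ball_subset_ball (le_of_lt hεT) hainv.1)
    obtain ⟨z₀, hz₀s, hz₀b⟩ := hmem
    have hz₀h : h z₀ = a⁻¹ := by rw [← hes z₀ hz₀s]; exact hz₀b
    have : V T ∩ r ⁻¹' {(a : OnePoint ℂ)} = {Φ z₀} := by
      apply Subset.antisymm
      · rintro x ⟨⟨z, ⟨hzs, hz0, hzlt⟩, rfl⟩, hra⟩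
        simp only [mem_preimage, mem_singleton_iff] at hra
        have hz : h z = a⁻¹ := (hform z (hss₀ hzs) a ha0).1 hra
        have : z = z₀ := hinjs hzs hz₀s (by rw [hz, hz₀h])
        rw [this]; exact mem_singleton _
      · rintro x hx
        rw [mem_singleton_iff] at hx
        subst hx
        refine ⟨⟨z₀, ⟨hz₀s, ?_, ?_⟩, rfl⟩, ?_⟩
        · rw [hz₀h]; exact inv_ne_zero ha0
        · rw [hz₀h]
          simpa [dist_zero_right] using hainv.1
        · simp only [mem_preimage, mem_singleton_iff]
          exact (hform z₀ (hss₀ hz₀s) a ha0).2 hz₀h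
    rw [this, Set.ncard_singleton]

lemma aux_eval_inv (p : Polynomial ℂ) {u : ℂ} (hu : u ≠ 0) :
    Polynomial.eval (u⁻¹) p = Polynomial.eval u p.reverse * (u⁻¹) ^ p.natDegree := by
  have : Invertible (u⁻¹) := invertibleOfNonzero (inv_ne_zero hu)
  have h := Polynomial.eval₂_reverse_mul_pow (RingHom.id ℂ) (u⁻¹) p
  rw [Polynomial.eval₂_eq_eval_map, Polynomial.map_id] at h
  rw [Polynomial.eval₂_eq_eval_map, Polynomial.map_id] at h
  rw [← h]
  congr 2
  rw [invOf_eq_inv, inv_inv]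

lemma aux_num_ne_zero_of_denom_root (F : RatFunc ℂ) {p : ℂ} (hp : F.denom.eval p = 0) :
    F.num.eval p ≠ 0 := by
  obtain ⟨a, b, hab⟩ := F.isCoprime_num_denom
  intro hN
  have := congrArg (Polynomial.eval p) hab
  simp only [Polynomial.eval_add, Polynomial.eval_mul, Polynomial.eval_one, hp, hN,
    mul_zero, add_zero, zero_add] at this
  exact one_ne_zero this.symm

lemma aux_deriv_ne_zero (F : RatFunc ℂ) (hsimple : ∀ z : ℂ, F.denom.rootMultiplicity z ≤ 1)
    {p : ℂ} (hp : F.denom.eval p = 0) : F.denom.derivative.eval p ≠ 0 := by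
  intro hD'
  have h1 : 1 < F.denom.rootMultiplicity p :=
    (Polynomial.one_lt_rootMultiplicity_iff_isRoot (F.denom_ne_zero)).2 ⟨hp, hD'⟩
  exact absurd (hsimple p) (not_le.2 h1)

/-- the finite pole instantiation -/
lemma aux_finite_pole (F : RatFunc ℂ) (r : OnePoint ℂ → OnePoint ℂ)
    (hagree : ∀ z : ℂ, F.denom.eval z ≠ 0 →
      r (z : OnePoint ℂ) = ((F.num.eval z / F.denom.eval z : ℂ) : OnePoint ℂ))
    (hpole : ∀ z : ℂ, F.denom.eval z = 0 → r (z : OnePoint ℂ) = ∞)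
    (hsimple : ∀ z : ℂ, F.denom.rootMultiplicity z ≤ 1)
    (p : ℂ) (hp : F.denom.eval p = 0)
    (O : Set (OnePoint ℂ)) (hO : IsOpen O) (hpO : ((p:ℂ) : OnePoint ℂ) ∈ O) :
    GoodAt r ((p:ℂ) : OnePoint ℂ) O := by
  set N := F.num with hNdef
  set D := F.denom with hDdef
  have hN : N.eval p ≠ 0 := aux_num_ne_zero_of_denom_root F hp
  have hD' : D.derivative.eval p ≠ 0 := aux_deriv_ne_zero F hsimple hp
  set h : ℂ → ℂ := fun z => D.eval z / N.eval z with hh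
  have hder : HasStrictDerivAt h
      ((D.derivative.eval p * N.eval p - D.eval p * N.derivative.eval p) / (N.eval p)^2) p :=
    (D.hasStrictDerivAt p).div (N.hasStrictDerivAt p) hN
  have hd0 : (D.derivative.eval p * N.eval p - D.eval p * N.derivative.eval p)
      / (N.eval p)^2 ≠ 0 := by
    rw [hp]
    field_simp
    simp [hD', hN]
  have hform : ∀ z ∈ {z : ℂ | N.eval z ≠ 0}, ∀ a : ℂ, a ≠ 0 →
      (r (((z:ℂ) : OnePoint ℂ)) = (a : OnePoint ℂ) ↔ h z = a⁻¹) := by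
    intro z hz a ha
    simp only [mem_setOf_eq] at hz
    by_cases hDz : D.eval z = 0
    · rw [hpole z hDz]
      simp only [hh, hDz, zero_div]
      constructor
      · intro hcon; exact absurd hcon.symm (OnePoint.coe_ne_infty a)
      · intro hcon; exact absurd hcon.symm (inv_ne_zero ha)
    · rw [hagree z hDz, OnePoint.coe_eq_coe]
      constructor
      · intro heq
        have : h z = (N.eval z / D.eval z)⁻¹ := by rw [hh, inv_div]
        rw [this, heq]
      · intro heq
        have : N.eval z / D.eval z = (h z)⁻¹ := by rw [hh, inv_div]
        rw [this, heq, inv_inv]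
  have := aux_local_good r (fun z : ℂ => ((z : ℂ) : OnePoint ℂ)) p
    OnePoint.continuous_coe OnePoint.coe_injective OnePoint.isOpenMap_coe
    h _ hd0 hder (by rw [hh]; simp [hp])
    {z : ℂ | N.eval z ≠ 0} (by
      have : {z : ℂ | N.eval z ≠ 0} = (fun z => N.eval z) ⁻¹' ({0}ᶜ) := by
        ext z; simp
      rw [this]
      exact IsOpen.preimage (Polynomial.continuous N) isOpen_compl_singleton) hN
    (by
      apply ContinuousOn.div (Polynomial.continuous _).continuousOn
        (Polynomial.continuous _).continuousOn
      intro z hz; exact hz)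
    hform O hO hpO
  exact this

/-- the infinite pole instantiation -/
lemma aux_infty_pole (F : RatFunc ℂ) (r : OnePoint ℂ → OnePoint ℂ)
    (hagree : ∀ z : ℂ, F.denom.eval z ≠ 0 →
      r (z : OnePoint ℂ) = ((F.num.eval z / F.denom.eval z : ℂ) : OnePoint ℂ))
    (hpole : ∀ z : ℂ, F.denom.eval z = 0 → r (z : OnePoint ℂ) = ∞)
    (hrinf : r ∞ = ∞)
    (hdeg : F.num.natDegree = F.denom.natDegree + 1)
    (O : Set (OnePoint ℂ)) (hO : IsOpen O) (hinfO : (∞ : OnePoint ℂ) ∈ O) :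
    GoodAt r (∞ : OnePoint ℂ) O := by
  set N := F.num with hNdef
  set D := F.denom with hDdef
  set d := D.natDegree with hd
  have hDne : D ≠ 0 := F.denom_ne_zero
  have hNne : N ≠ 0 := by
    intro hcon
    have h0 : N.natDegree = 0 := by rw [hcon]; simp
    rw [hdeg] at h0
    omega
  set Nr := N.reverse with hNr
  set Dr := D.reverse with hDr
  have hNr0 : Nr.eval 0 ≠ 0 := by
    rw [hNr, ← Polynomial.coeff_zero_eq_eval_zero, Polynomial.coeff_zero_reverse]
    exact Polynomial.leadingCoeff_ne_zero.2 hNne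
  have hDr0 : Dr.eval 0 ≠ 0 := by
    rw [hDr, ← Polynomial.coeff_zero_eq_eval_zero, Polynomial.coeff_zero_reverse]
    exact Polynomial.leadingCoeff_ne_zero.2 hDne
  set h : ℂ → ℂ := fun u => u * Dr.eval u / Nr.eval u with hh
  have hder : HasStrictDerivAt h
      (((1 * Dr.eval 0 + 0 * Dr.derivative.eval 0) * Nr.eval 0
          - 0 * Dr.eval 0 * Nr.derivative.eval 0) / (Nr.eval 0)^2) 0 := by
    exact ((hasStrictDerivAt_id 0).mul (Dr.hasStrictDerivAt 0)).div
      (Nr.hasStrictDerivAt 0) hNr0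
  have hd0 : ((1 * Dr.eval 0 + 0 * Dr.derivative.eval 0) * Nr.eval 0
      - 0 * Dr.eval 0 * Nr.derivative.eval 0) / (Nr.eval 0)^2 ≠ 0 := by
    field_simp
    simp [hDr0, hNr0]
  set s₀ : Set ℂ := {u | Nr.eval u ≠ 0 ∧ Dr.eval u ≠ 0} with hs₀def
  have hs₀open : IsOpen s₀ := by
    have : s₀ = (fun u => Nr.eval u) ⁻¹' ({0}ᶜ) ∩ (fun u => Dr.eval u) ⁻¹' ({0}ᶜ) := by
      ext u; simp [hs₀def]
    rw [this]
    exact ((Polynomial.continuous Nr).isOpen_preimage _ isOpen_compl_singleton).inter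
      ((Polynomial.continuous Dr).isOpen_preimage _ isOpen_compl_singleton)
  have h0s₀ : (0:ℂ) ∈ s₀ := ⟨hNr0, hDr0⟩
  have hform : ∀ u ∈ s₀, ∀ a : ℂ, a ≠ 0 →
      (r (auxPhi u) = (a : OnePoint ℂ) ↔ h u = a⁻¹) := by
    intro u hu a ha
    obtain ⟨hNru, hDru⟩ := hu
    by_cases hu0 : u = 0
    · subst hu0
      rw [auxPhi_zero, hrinf]
      simp only [hh, zero_mul, zero_div]
      constructor
      · intro hcon; exact absurd hcon.symm (OnePoint.coe_ne_infty a)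
      · intro hcon; exact absurd hcon.symm (inv_ne_zero ha)
    · rw [auxPhi_ne_zero hu0]
      have hNz : N.eval u⁻¹ = Nr.eval u * (u⁻¹) ^ (d+1) := by
        rw [aux_eval_inv N hu0, hdeg]
      have hDz : D.eval u⁻¹ = Dr.eval u * (u⁻¹) ^ d := aux_eval_inv D hu0
      have hDzne : D.eval u⁻¹ ≠ 0 := by
        rw [hDz]
        exact mul_ne_zero hDru (pow_ne_zero _ (inv_ne_zero hu0))
      rw [hagree _ hDzne, OnePoint.coe_eq_coe]
      have hkey : N.eval u⁻¹ / D.eval u⁻¹ = Nr.eval u / (u * Dr.eval u) := by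
        rw [hNz, hDz, pow_succ]
        field_simp
      rw [hkey]
      constructor
      · intro heq
        have : h u = (Nr.eval u / (u * Dr.eval u))⁻¹ := by rw [hh, inv_div]
        rw [this, heq]
      · intro heq
        have : Nr.eval u / (u * Dr.eval u) = (h u)⁻¹ := by rw [hh, inv_div]
        rw [this, heq, inv_inv]
  have := aux_local_good r auxPhi 0
    auxPhi_continuous auxPhi_injective auxPhi_isOpenMap
    h _ hd0 hder (by rw [hh]; simp)
    s₀ hs₀open h0s₀
    (by
      apply ContinuousOn.div
        (continuous_id.mul (Polynomial.continuous Dr)).continuousOn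
        (Polynomial.continuous Nr).continuousOn
      intro u hu; exact hu.1)
    hform O hO (by rw [auxPhi_zero]; exact hinfO)
  rw [auxPhi_zero] at this
  exact this


/-- number of distinct roots of the denominator equals its degree (simple roots, ℂ) -/
lemma aux_root_count (D : Polynomial ℂ) (hD : D ≠ 0)
    (hsimple : ∀ z : ℂ, D.rootMultiplicity z ≤ 1) :
    {z : ℂ | D.eval z = 0}.ncard = D.natDegree := by
  have hnodup : D.roots.Nodup := by
    rw [Multiset.nodup_iff_count_le_one]
    intro z
    rw [Polynomial.count_roots]
    exact hsimple z
  have hset : {z : ℂ | D.eval z = 0} = ↑(D.roots.toFinset) := by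
    ext z
    simp only [mem_setOf_eq, Finset.coe_sort_coe, Multiset.mem_toFinset, Finset.mem_coe,
      Polynomial.mem_roots', Polynomial.IsRoot.def]
    exact ⟨fun h => ⟨hD, h⟩, fun h => h.2⟩
  rw [hset, Set.ncard_coe_finset, Multiset.toFinset_card_of_nodup hnodup]
  exact (Polynomial.splits_iff_card_roots.1 (IsAlgClosed.splits D))

/-- the poles are ∞ together with the roots of the denominator -/
lemma aux_poles_eq (F : RatFunc ℂ) (r : OnePoint ℂ → OnePoint ℂ)
    (hagree : ∀ z : ℂ, F.denom.eval z ≠ 0 →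
      r (z : OnePoint ℂ) = ((F.num.eval z / F.denom.eval z : ℂ) : OnePoint ℂ))
    (hpole : ∀ z : ℂ, F.denom.eval z = 0 → r (z : OnePoint ℂ) = ∞)
    {k : ℕ} {w : Fin k → OnePoint ℂ} (hpoles : r ⁻¹' {∞} = Set.range w)
    (hinf : (∞ : OnePoint ℂ) ∈ Set.range w) :
    Set.range w = insert (∞ : OnePoint ℂ)
      ((↑) '' {z : ℂ | F.denom.eval z = 0} : Set (OnePoint ℂ)) := by
  rw [← hpoles]
  ext x
  induction x using OnePoint.rec with
  | infty =>
    simp only [mem_preimage, mem_singleton_iff, mem_insert_iff]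
    constructor
    · intro _; left; trivial
    · intro _
      have h2 := hinf
      rw [← hpoles] at h2
      exact h2
  | coe z =>
    simp only [mem_preimage, mem_singleton_iff, mem_insert_iff, mem_image, mem_setOf_eq]
    constructor
    · intro hr
      by_cases hDz : F.denom.eval z = 0
      · right; exact ⟨z, hDz, rfl⟩
      · rw [hagree z hDz] at hr
        exact absurd hr (OnePoint.coe_ne_infty _)
    · rintro (hcon | ⟨z', hz', hzz⟩)
      · exact absurd hcon (OnePoint.coe_ne_infty z)
      · have : z' = z := OnePoint.coe_injective hzz
        subst this
        exact hpole z' hz'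

/-- If `∞` is a pole, then the numerator has degree exactly `denom.natDegree + 1`. -/
lemma aux_deg (F : RatFunc ℂ) (r : OnePoint ℂ → OnePoint ℂ)
    (hagree : ∀ z : ℂ, F.denom.eval z ≠ 0 →
      r (z : OnePoint ℂ) = ((F.num.eval z / F.denom.eval z : ℂ) : OnePoint ℂ))
    (hpole : ∀ z : ℂ, F.denom.eval z = 0 → r (z : OnePoint ℂ) = ∞)
    {k : ℕ} {w : Fin k → OnePoint ℂ} (hw : Function.Injective w)
    (hpoles : r ⁻¹' {∞} = Set.range w)
    (hsimple : ∀ z : ℂ, F.denom.rootMultiplicity z ≤ 1)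
    (hsimple_inf : F.num.natDegree ≤ F.denom.natDegree + 1)
    (T₀ : ℝ)
    (hsol : ∀ a : ℂ, T₀ ≤ ‖a‖ → (r ⁻¹' {(a : OnePoint ℂ)}).ncard = k)
    (hinf : (∞ : OnePoint ℂ) ∈ Set.range w) :
    F.num.natDegree = F.denom.natDegree + 1 := by
  set N := F.num with hNdef
  set D := F.denom with hDdef
  have hDne : D ≠ 0 := F.denom_ne_zero
  -- k = D.natDegree + 1
  have hZfin : {z : ℂ | D.eval z = 0}.Finite := by
    have := Polynomial.finite_setOf_isRoot hDne
    convert this using 1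
    rfl
  have hk : k = D.natDegree + 1 := by
    have h1 : (Set.range w).ncard = k := by
      rw [← Set.image_univ, Set.ncard_image_of_injective _ hw, Set.ncard_univ]
      simp
    rw [aux_poles_eq F r hagree hpole hpoles hinf] at h1
    rw [Set.ncard_insert_of_notMem OnePoint.infty_notMem_image_coe
      (hZfin.image _), Set.ncard_image_of_injective _ OnePoint.coe_injective,
      aux_root_count D hDne hsimple] at h1
    omega
  -- choose a value a with T₀ ≤ ‖a‖ and N - C a * D ≠ 0
  have hrinf : r ∞ = ∞ := by
    have h2 := hinf; rw [← hpoles] at h2; exact h2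
  obtain ⟨a, haT, haP⟩ : ∃ a : ℂ, T₀ ≤ ‖a‖ ∧ N - Polynomial.C a * D ≠ 0 := by
    set a₁ : ℂ := ((max T₀ 1 : ℝ) : ℂ) with ha₁
    set a₂ : ℂ := ((max T₀ 1 + 1 : ℝ) : ℂ) with ha₂
    have hn₁ : T₀ ≤ ‖a₁‖ := by
      rw [ha₁, Complex.norm_real, Real.norm_eq_abs]
      have h1 : (0:ℝ) < max T₀ 1 := lt_of_lt_of_le one_pos (le_max_right _ _)
      rw [abs_of_pos h1]
      exact le_max_left _ _
    have hn₂ : T₀ ≤ ‖a₂‖ := by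
      rw [ha₂, Complex.norm_real, Real.norm_eq_abs]
      have h1 : (0:ℝ) < max T₀ 1 + 1 := by
        have := lt_of_lt_of_le one_pos (le_max_right T₀ 1); linarith
      rw [abs_of_pos h1]
      have := le_max_left T₀ 1; linarith
    by_cases h1 : N - Polynomial.C a₁ * D ≠ 0
    · exact ⟨a₁, hn₁, h1⟩
    by_cases h2 : N - Polynomial.C a₂ * D ≠ 0
    · exact ⟨a₂, hn₂, h2⟩
    exfalso
    rw [not_not, sub_eq_zero] at h1 h2
    have h3 : (Polynomial.C a₁ - Polynomial.C a₂) * D = 0 := by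
      rw [sub_mul, ← h1, ← h2, sub_self]
    have ha12 : a₁ ≠ a₂ := by
      rw [ha₁, ha₂]
      intro hcon
      have := congrArg Complex.re hcon
      simp at this
    rcases mul_eq_zero.1 h3 with h4 | h4
    · rw [sub_eq_zero, Polynomial.C_inj] at h4
      exact ha12 h4
    · exact hDne h4
  -- preimage of a is contained in the roots of N - C a * D
  have hsub : r ⁻¹' {(a : OnePoint ℂ)} ⊆
      (↑) '' {z : ℂ | (N - Polynomial.C a * D).eval z = 0} := by
    intro x hx
    rw [mem_preimage, mem_singleton_iff] at hx
    induction x using OnePoint.rec with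
    | infty => rw [hrinf] at hx; exact absurd hx.symm (OnePoint.coe_ne_infty a)
    | coe z =>
      by_cases hDz : D.eval z = 0
      · rw [hpole z hDz] at hx; exact absurd hx.symm (OnePoint.coe_ne_infty a)
      · rw [hagree z hDz, OnePoint.coe_eq_coe, div_eq_iff hDz] at hx
        refine ⟨z, ?_, rfl⟩
        simp only [mem_setOf_eq, Polynomial.eval_sub, Polynomial.eval_mul,
          Polynomial.eval_C]
        rw [hx]; ring
  -- upper bound on the number of solutions
  have hroots_fin : {z : ℂ | (N - Polynomial.C a * D).eval z = 0}.Finite :=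
    Polynomial.finite_setOf_isRoot haP
  have hbound : (r ⁻¹' {(a : OnePoint ℂ)}).ncard ≤
      max N.natDegree D.natDegree := by
    have h1 : (r ⁻¹' {(a : OnePoint ℂ)}).ncard ≤
        ((↑) '' {z : ℂ | (N - Polynomial.C a * D).eval z = 0} :
          Set (OnePoint ℂ)).ncard :=
      Set.ncard_le_ncard hsub (hroots_fin.image _)
    rw [Set.ncard_image_of_injective _ OnePoint.coe_injective] at h1
    refine h1.trans ?_
    -- roots set card ≤ natDegree
    have hset : {z : ℂ | (N - Polynomial.C a * D).eval z = 0} =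
        ↑((N - Polynomial.C a * D).roots.toFinset) := by
      ext z
      simp only [mem_setOf_eq, Finset.coe_sort_coe, Multiset.mem_toFinset, Finset.mem_coe,
        Polynomial.mem_roots', Polynomial.IsRoot.def]
      exact ⟨fun h => ⟨haP, h⟩, fun h => h.2⟩
    rw [hset, Set.ncard_coe_finset]
    calc (N - Polynomial.C a * D).roots.toFinset.card
        ≤ Multiset.card (N - Polynomial.C a * D).roots := Multiset.toFinset_card_le _
      _ ≤ (N - Polynomial.C a * D).natDegree := Polynomial.card_roots' _
      _ ≤ max N.natDegree (Polynomial.C a * D).natDegree := Polynomial.natDegree_sub_le _ _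
      _ ≤ max N.natDegree D.natDegree := by
          apply max_le_max (le_refl _)
          exact Polynomial.natDegree_C_mul_le a D
  rw [hsol a haT, hk] at hbound
  rcases le_or_gt N.natDegree D.natDegree with hle | hlt
  · rw [max_eq_right hle] at hbound; omega
  · omega


/-- Let `r` be (the extension to the Riemann sphere of) a rational function `F = num/denom`
whose poles `w 0, …, w (k-1)` are all simple (this includes a possible simple pole at `∞`),
and suppose that `r z = a` has exactly `k` distinct solutions whenever `T₀ ≤ ‖a‖`.
Then for all sufficiently large `T` the set `Ω(r,T) = {z ∉ r⁻¹(∞) : ‖r z‖ > T}` is a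
disjoint union of `k` connected open sets, each containing exactly one pole in its closure,
and for every `a` with `‖a‖ > T` each component contains exactly one solution of `r z = a`. -/
theorem omega_decomposition (F : RatFunc ℂ) (r : OnePoint ℂ → OnePoint ℂ)
    (hcont : Continuous r)
    (hagree : ∀ z : ℂ, F.denom.eval z ≠ 0 →
      r (z : OnePoint ℂ) = ((F.num.eval z / F.denom.eval z : ℂ) : OnePoint ℂ))
    (hpole : ∀ z : ℂ, F.denom.eval z = 0 → r (z : OnePoint ℂ) = ∞)
    (k : ℕ) (w : Fin k → OnePoint ℂ) (hw : Function.Injective w)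
    (hpoles : r ⁻¹' {∞} = Set.range w)
    (hsimple : ∀ z : ℂ, F.denom.rootMultiplicity z ≤ 1)
    (hsimple_inf : F.num.natDegree ≤ F.denom.natDegree + 1)
    (T₀ : ℝ)
    (hsol : ∀ a : ℂ, T₀ ≤ ‖a‖ → (r ⁻¹' {(a : OnePoint ℂ)}).ncard = k) :
    ∃ T₁ : ℝ, T₀ ≤ T₁ ∧ ∀ T : ℝ, T₁ ≤ T →
      ∃ U : Fin k → Set (OnePoint ℂ),
        (∀ i, IsOpen (U i)) ∧ (∀ i, IsConnected (U i)) ∧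
        Pairwise (Function.onFun Disjoint U) ∧
        ({x : OnePoint ℂ | x ∉ r ⁻¹' {∞} ∧ ∃ c : ℂ, r x = (c : OnePoint ℂ) ∧ T < ‖c‖}
          = ⋃ i, U i) ∧
        (∀ i, (closure (U i) ∩ r ⁻¹' {∞}).ncard = 1) ∧
        (∀ a : ℂ, T < ‖a‖ → ∀ i, (U i ∩ r ⁻¹' {(a : OnePoint ℂ)}).ncard = 1) := by
  classical
  obtain ⟨O, hOopen, hOmem, hOdisj⟩ := aux_disjoint_opens w hw
  -- Good data at every pole
  have hgood : ∀ i : Fin k, GoodAt r (w i) (O i) := by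
    intro i
    by_cases hne : w i = ∞
    · have hinf : (∞ : OnePoint ℂ) ∈ Set.range w := ⟨i, hne⟩
      have hrinf : r ∞ = ∞ := by
        have h2 := hinf; rw [← hpoles] at h2; exact h2
      have hdeg := aux_deg F r hagree hpole hw hpoles hsimple hsimple_inf T₀ hsol hinf
      rw [hne]
      exact aux_infty_pole F r hagree hpole hrinf hdeg (O i) (hOopen i) (hne ▸ hOmem i)
    · obtain ⟨p, hp⟩ := OnePoint.ne_infty_iff_exists.1 hne
      have hDp : F.denom.eval p = 0 := by
        by_contra hDp
        have h1 : ((p:ℂ) : OnePoint ℂ) ∈ r ⁻¹' {∞} := by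
          rw [hpoles, hp]; exact ⟨i, rfl⟩
        rw [mem_preimage, mem_singleton_iff, hagree p hDp] at h1
        exact OnePoint.coe_ne_infty _ h1
      rw [← hp]
      exact aux_finite_pole F r hagree hpole hsimple p hDp (O i) (hOopen i)
        (hp ▸ hOmem i)
  choose G V T₂ hT₂1 hGopen hGmem hGsub hmain using hgood
  -- compactness: outside ⋃ G i the function r is bounded
  set K : Set (OnePoint ℂ) := (⋃ i, G i)ᶜ with hK
  have hKcomp : IsCompact K :=
    (isOpen_iUnion (fun i => hGopen i)).isClosed_compl.isCompact
  have hKpole : ∀ x ∈ K, r x ≠ ∞ := by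
    intro x hx hcon
    have h1 : x ∈ r ⁻¹' {∞} := hcon
    rw [hpoles] at h1
    obtain ⟨i, rfl⟩ := h1
    exact hx (mem_iUnion.2 ⟨i, hGmem i⟩)
  obtain ⟨M, hM⟩ : ∃ M : ℝ, ∀ x ∈ K, ∀ c : ℂ, r x = (c : OnePoint ℂ) → ‖c‖ ≤ M := by
    have hcover : K ⊆ ⋃ n : ℕ, r ⁻¹' ((↑) '' Metric.ball (0:ℂ) n) := by
      intro x hx
      obtain ⟨c, hc⟩ := OnePoint.ne_infty_iff_exists.1 (hKpole x hx)
      obtain ⟨n, hn⟩ := exists_nat_gt ‖c‖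
      refine mem_iUnion.2 ⟨n, ?_⟩
      rw [mem_preimage, ← hc]
      exact ⟨c, by rwa [Metric.mem_ball, dist_zero_right], rfl⟩
    have hopen : ∀ n : ℕ, IsOpen (r ⁻¹' ((↑) '' Metric.ball (0:ℂ) n)) := fun n =>
      (OnePoint.isOpen_image_coe.2 Metric.isOpen_ball).preimage hcont
    obtain ⟨t, ht⟩ := hKcomp.elim_finite_subcover _ hopen hcover
    refine ⟨(t.sup id : ℕ), ?_⟩
    intro x hx c hc
    obtain ⟨n, hnt, hxn⟩ := mem_iUnion₂.1 (ht hx)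
    rw [mem_preimage, hc] at hxn
    obtain ⟨c', hc', hcc⟩ := hxn
    have : c' = c := OnePoint.coe_injective hcc
    subst this
    rw [Metric.mem_ball, dist_zero_right] at hc'
    have h2 : (n:ℝ) ≤ (t.sup id : ℕ) := by
      exact_mod_cast Nat.cast_le.2 (Finset.le_sup (f := id) hnt)
    linarith
  -- uniform lower threshold
  obtain ⟨C, hC⟩ : ∃ C : ℝ, ∀ i, T₂ i ≤ C := by
    refine ⟨((Finset.univ.sup fun i => ⌈T₂ i⌉₊ : ℕ) : ℝ), fun i => ?_⟩
    calc T₂ i ≤ (⌈T₂ i⌉₊ : ℝ) := Nat.le_ceil _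
    _ ≤ _ := Nat.cast_le.2 (Finset.le_sup (f := fun i => ⌈T₂ i⌉₊) (Finset.mem_univ i))
  set T₁ : ℝ := max (max T₀ (M + 1)) (max 1 C) with hT₁
  refine ⟨T₁, le_trans (le_max_left _ _) (le_max_left _ _), ?_⟩
  intro T hT
  have hTi : ∀ i, T₂ i ≤ T :=
    fun i => le_trans (hC i) (le_trans (le_max_right 1 C)
      (le_trans (le_max_right _ _) hT))
  have hTM : M + 1 ≤ T :=
    le_trans (le_max_right T₀ (M+1)) (le_trans (le_max_left _ _) hT)
  refine ⟨fun i => V i T, fun i => (hmain i T (hTi i)).1,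
    fun i => (hmain i T (hTi i)).2.1, ?_, ?_, ?_, ?_⟩
  · -- pairwise disjoint
    intro i j hij
    exact Disjoint.mono ((hmain i T (hTi i)).2.2.1) ((hmain j T (hTi j)).2.2.1)
      (hOdisj hij)
  · -- set equality
    ext x
    simp only [mem_setOf_eq, mem_iUnion, mem_preimage, mem_singleton_iff]
    constructor
    · rintro ⟨hxp, c, hrc, hTc⟩
      have hxK : x ∉ K := by
        intro hxK
        have := hM x hxK c hrc
        linarith
      rw [hK, mem_compl_iff, not_not, mem_iUnion] at hxK
      obtain ⟨i, hxi⟩ := hxK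
      exact ⟨i, (hmain i T (hTi i)).2.2.2.2.1 x hxi ⟨c, hrc, hTc⟩⟩
    · rintro ⟨i, hxi⟩
      obtain ⟨c, hrc, hTc⟩ := (hmain i T (hTi i)).2.2.2.1 x hxi
      refine ⟨?_, c, hrc, hTc⟩
      rw [hrc]
      exact OnePoint.coe_ne_infty c
  · -- closures contain exactly one pole
    intro i
    have hset : closure (V i T) ∩ r ⁻¹' {∞} = {w i} := by
      apply Subset.antisymm
      · rintro x ⟨hxcl, hxp⟩
        rw [hpoles] at hxp
        obtain ⟨j, rfl⟩ := hxp
        rw [mem_singleton_iff]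
        by_contra hji
        have hji' : j ≠ i := fun hcon => hji (by rw [hcon])
        have hdisj : Disjoint (O j) (V i T) :=
          Disjoint.mono_right ((hmain i T (hTi i)).2.2.1) (hOdisj hji')
        have hVsub : V i T ⊆ (O j)ᶜ := fun y hy =>
          fun hyO => (disjoint_left.1 hdisj) hyO hy
        have hclsub : closure (V i T) ⊆ (O j)ᶜ :=
          closure_minimal hVsub (hOopen j).isClosed_compl
        exact (hclsub hxcl) (hOmem j)
      · intro x hx
        rw [mem_singleton_iff] at hx
        subst hx
        refine ⟨(hmain i T (hTi i)).2.2.2.2.2.1, ?_⟩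
        rw [hpoles]
        exact ⟨i, rfl⟩
    rw [hset, Set.ncard_singleton]
  · -- counting
    intro a haT i
    exact (hmain i T (hTi i)).2.2.2.2.2.2 a haT
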